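/- For every integer k ≥ 1 and every positive integer n, 2^(2k-1) · S_{2k-1}(n) = Σ_{m=1}^{k} Q_{k,m}(n) · C(n+m, 2m-1), where Q_{k,1}(n) = n^(2k-1) and, for 2 ≤ m ≤ k, Q_{k,m}(n) = 2 · Σ_{j=m}^{k} C(2k-1, 2j-2) · R(j-1, m-1) · n^(2k-2j+1). -/

import Mathlib

/-- `S k n = 1^k + 2^k + ⋯ + n^k`, the sum of the `k`-th powers of the first `n`
positive integers. -/
def S (k n : ℕ) : ℕ := ∑ i ∈ Finset.Icc 1 n, i ^ k

/-- `R k m = ∑_{j=0}^m (-1)^j C(2m, j) (m-j)^{2k}`, the sequence A304330. -/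
def R (k m : ℕ) : ℤ :=
  ∑ j ∈ Finset.range (m + 1),
    (-1 : ℤ) ^ j * ((2 * m).choose j : ℤ) * (((m - j) ^ (2 * k) : ℕ) : ℤ)

/-- The polynomials `Q_{k,m}` evaluated at `n`:  `Q_{k,1}(n) = n^{2k-1}` and, for
`m ≥ 2`, `Q_{k,m}(n) = 2 ∑_{j=m}^k C(2k-1, 2j-2) R(j-1, m-1) n^{2k-2j+1}`. -/
def Q (k m n : ℕ) : ℤ :=
  if m = 1 then ((n : ℤ)) ^ (2 * k - 1)
  else 2 * ∑ j ∈ Finset.Icc m k,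
    ((2 * k - 1).choose (2 * j - 2) : ℤ) * R (j - 1) (m - 1) * (n : ℤ) ^ (2 * k - 2 * j + 1)

open Finset

/- splitting a sum over an even/odd range -/
lemma sum_range_even_odd (h : ℕ → ℤ) (L : ℕ) :
    ∑ t ∈ range (2 * L + 1), h t
      = ∑ e ∈ range (L + 1), h (2 * e) + ∑ e ∈ range L, h (2 * e + 1) := by
  induction L with
  | zero => simp
  | succ L ih =>
      rw [show 2 * (L + 1) + 1 = (2 * L + 1) + 1 + 1 by ring, sum_range_succ, sum_range_succ, ih,
        sum_range_succ (fun e => h (2 * e)) (L + 1), sum_range_succ (fun e => h (2 * e + 1)) L,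
        show 2 * (L + 1) = 2 * L + 1 + 1 by ring]
      ring

lemma sum_range_even_odd' (h : ℕ → ℤ) (L : ℕ) :
    ∑ t ∈ range (2 * L), h t
      = ∑ e ∈ range L, h (2 * e) + ∑ e ∈ range L, h (2 * e + 1) := by
  induction L with
  | zero => simp
  | succ L ih =>
      rw [show 2 * (L + 1) = (2 * L) + 1 + 1 by ring, sum_range_succ, sum_range_succ, ih,
        sum_range_succ (fun e => h (2 * e)) L, sum_range_succ (fun e => h (2 * e + 1)) L]
      ring

/- even part of the binomial expansion -/
lemma even_part (a b : ℤ) (N : ℕ) :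
    (a + b) ^ N + (a - b) ^ N
      = ∑ t ∈ range (N + 1), (1 + (-1) ^ t) * (N.choose t : ℤ) * a ^ (N - t) * b ^ t := by
  rw [show a + b = b + a by ring, show a - b = -b + a by ring, add_pow b a N,
    add_pow (-b) a N, ← sum_add_distrib]
  refine sum_congr rfl fun t ht => ?_
  rw [neg_pow]
  ring

lemma even_expand (a : ℤ) (l : ℕ) :
    (a + 1) ^ (2 * l) + (a - 1) ^ (2 * l)
      = ∑ e ∈ range (l + 1), 2 * ((2 * l).choose (2 * e) : ℤ) * a ^ (2 * l - 2 * e) := by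
  rw [even_part a 1 (2 * l), sum_range_even_odd
    (fun t => (1 + (-1) ^ t) * ((2 * l).choose t : ℤ) * a ^ (2 * l - t) * 1 ^ t) l]
  have h1 : ∀ e ∈ range l,
      (1 + (-1 : ℤ) ^ (2 * e + 1)) * ((2 * l).choose (2 * e + 1) : ℤ)
        * a ^ (2 * l - (2 * e + 1)) * 1 ^ (2 * e + 1) = 0 := by
    intro e he
    have : ((-1 : ℤ)) ^ (2 * e + 1) = -1 := by
      rw [pow_succ, pow_mul]; norm_num
    rw [this]; ring
  rw [sum_congr rfl h1, sum_const_zero, add_zero]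
  refine sum_congr rfl fun e he => ?_
  have : ((-1 : ℤ)) ^ (2 * e) = 1 := by rw [pow_mul]; norm_num
  rw [this]
  ring

lemma odd_part (a b : ℤ) (k : ℕ) (hk : 1 ≤ k) :
    (a + b) ^ (2 * k - 1) + (a - b) ^ (2 * k - 1)
      = ∑ j ∈ Finset.Icc 1 k,
          2 * ((2 * k - 1).choose (2 * j - 2) : ℤ) * a ^ (2 * k - 2 * j + 1) * b ^ (2 * j - 2) := by
  rw [even_part a b (2 * k - 1), show 2 * k - 1 + 1 = 2 * k by omega, sum_range_even_odd'
    (fun t => (1 + (-1) ^ t) * ((2 * k - 1).choose t : ℤ) * a ^ (2 * k - 1 - t) * b ^ t) k]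
  have h1 : ∀ e ∈ range k,
      (1 + (-1 : ℤ) ^ (2 * e + 1)) * ((2 * k - 1).choose (2 * e + 1) : ℤ)
        * a ^ (2 * k - 1 - (2 * e + 1)) * b ^ (2 * e + 1) = 0 := by
    intro e he
    have : ((-1 : ℤ)) ^ (2 * e + 1) = -1 := by
      rw [pow_succ, pow_mul]; norm_num
    rw [this]; ring
  rw [sum_congr rfl h1, sum_const_zero, add_zero, show Finset.Icc 1 k = Finset.Ico 1 (k + 1) by
    rw [Finset.Ico_add_one_right_eq_Icc], sum_Ico_eq_sum_range]
  simp only [show k + 1 - 1 = k from rfl]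
  refine sum_congr rfl fun e he => ?_
  have h2 : ((-1 : ℤ)) ^ (2 * e) = 1 := by rw [pow_mul]; norm_num
  have h3 : 2 * (1 + e) - 2 = 2 * e := by omega
  have h4 : 2 * k - 2 * (1 + e) + 1 = 2 * k - 1 - 2 * e := by
    simp only [mem_range] at he; omega
  rw [h2, h3, h4]
  ring

/- one finite-difference step -/
lemma diff_step (N : ℕ) (f : ℕ → ℤ) :
    ∑ j ∈ range (N + 2), (-1) ^ j * ((N + 1).choose j : ℤ) * f j
      = ∑ j ∈ range (N + 1), (-1) ^ j * (N.choose j : ℤ) * (f j - f (j + 1)) := by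
  have hT : ∑ j ∈ range (N + 2), (-1 : ℤ) ^ j * (N.choose j : ℤ) * f j
      = ∑ j ∈ range (N + 1), (-1 : ℤ) ^ j * (N.choose j : ℤ) * f j := by
    rw [sum_range_succ, Nat.choose_succ_self]
    simp
  have hT' : ∑ j ∈ range (N + 2), (-1 : ℤ) ^ j * (N.choose j : ℤ) * f j
      = (∑ i ∈ range (N + 1), (-1 : ℤ) ^ (i + 1) * (N.choose (i + 1) : ℤ) * f (i + 1)) + f 0 := by
    rw [sum_range_succ' (fun j => (-1 : ℤ) ^ j * (N.choose j : ℤ) * f j) (N + 1)]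
    simp
  have h3 : (∑ i ∈ range (N + 1), (-1 : ℤ) ^ (i + 1) * (N.choose (i + 1) : ℤ) * f (i + 1))
      = (∑ j ∈ range (N + 1), (-1 : ℤ) ^ j * (N.choose j : ℤ) * f j) - f 0 := by
    rw [← hT, hT']
    ring
  rw [sum_range_succ' (fun j => (-1 : ℤ) ^ j * (((N + 1).choose j : ℕ) : ℤ) * f j) (N + 1)]
  have h2 : ∀ i ∈ range (N + 1),
      (-1 : ℤ) ^ (i + 1) * (((N + 1).choose (i + 1) : ℕ) : ℤ) * f (i + 1)
        = (-((-1 : ℤ) ^ i * (N.choose i : ℤ) * f (i + 1)))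
          + (-1 : ℤ) ^ (i + 1) * (N.choose (i + 1) : ℤ) * f (i + 1) := by
    intro i hi
    rw [Nat.choose_succ_succ]
    push_cast
    ring
  rw [sum_congr rfl h2, sum_add_distrib, h3, sum_neg_distrib]
  simp only [mul_sub, sum_sub_distrib, pow_zero, Nat.choose_zero_right, Nat.cast_one]
  ring

/- alternating sums of binomial coefficients against low-degree polynomials vanish -/
lemma alt_vanish : ∀ N : ℕ, ∀ d < N, ∀ c : ℤ,
    ∑ j ∈ range (N + 1), (-1) ^ j * (N.choose j : ℤ) * (c - j) ^ d = 0 := by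
  intro N
  induction N with
  | zero => omega
  | succ N ih =>
      intro d hd c
      match d with
      | 0 =>
          simp only [pow_zero, mul_one]
          exact Int.alternating_sum_range_choose_of_ne (Nat.succ_ne_zero N)
      | d' + 1 =>
          have hexp : ∀ x : ℤ, x ^ (d' + 1) - (x - 1) ^ (d' + 1)
              = ∑ b ∈ range (d' + 1),
                  -((-1 : ℤ) ^ (d' + 1 - b) * (((d' + 1).choose b : ℕ) : ℤ) * x ^ b) := by
            intro x
            rw [show x - 1 = x + (-1) by ring, add_pow x (-1) (d' + 1), sum_range_succ]
            simp only [Nat.choose_self, Nat.sub_self, pow_zero, Nat.cast_one, mul_one, one_mul]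
            have hc : ∀ m ∈ range (d' + 1),
                x ^ m * (-1 : ℤ) ^ (d' + 1 - m) * (((d' + 1).choose m : ℕ) : ℤ)
                  = -(-((-1 : ℤ) ^ (d' + 1 - m) * (((d' + 1).choose m : ℕ) : ℤ) * x ^ m)) := by
              intro m hm; ring
            rw [sum_congr rfl hc, sum_neg_distrib]
            ring
          show ∑ j ∈ range (N + 2),
              (-1 : ℤ) ^ j * (((N + 1).choose j : ℕ) : ℤ) * ((c - j) ^ (d' + 1)) = 0
          rw [diff_step N (fun j => (c - (j : ℤ)) ^ (d' + 1))]
          have h2 : ∀ j ∈ range (N + 1),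
              (-1 : ℤ) ^ j * ((N.choose j : ℕ) : ℤ)
                  * ((c - (j : ℤ)) ^ (d' + 1) - (c - ((j + 1 : ℕ) : ℤ)) ^ (d' + 1))
                = ∑ b ∈ range (d' + 1),
                    -((-1 : ℤ) ^ (d' + 1 - b) * (((d' + 1).choose b : ℕ) : ℤ)
                      * ((-1 : ℤ) ^ j * ((N.choose j : ℕ) : ℤ) * (c - (j : ℤ)) ^ b)) := by
            intro j hj
            push_cast
            rw [show c - ((j : ℤ) + 1) = (c - (j : ℤ)) - 1 by ring, hexp (c - (j : ℤ)), mul_sum]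
            refine sum_congr rfl fun b hb => ?_
            ring
          rw [sum_congr rfl h2, sum_comm]
          refine sum_eq_zero fun b hb => ?_
          simp only [mem_range] at hb
          have hb' : b < N := by omega
          calc ∑ j ∈ range (N + 1),
                -((-1 : ℤ) ^ (d' + 1 - b) * (((d' + 1).choose b : ℕ) : ℤ)
                  * ((-1 : ℤ) ^ j * ((N.choose j : ℕ) : ℤ) * (c - (j : ℤ)) ^ b))
              = -((-1 : ℤ) ^ (d' + 1 - b) * (((d' + 1).choose b : ℕ) : ℤ)
                  * ∑ j ∈ range (N + 1), (-1 : ℤ) ^ j * ((N.choose j : ℕ) : ℤ) * (c - (j : ℤ)) ^ b) := by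
                rw [sum_neg_distrib, mul_sum]
            _ = 0 := by rw [ih b hb' c]; ring

lemma R_one (l : ℕ) (hl : 1 ≤ l) : R l 1 = 1 := by
  unfold R
  rw [sum_range_succ, sum_range_succ, sum_range_zero]
  have h0 : (1 - 1) ^ (2 * l) = 0 := by
    rw [Nat.sub_self, Nat.zero_pow (by omega : 0 < 2 * l)]
  rw [h0]
  simp

/- the symmetric (full-range) form of `R` -/
lemma R_full (k m : ℕ) (hk : 1 ≤ k) :
    2 * R k m
      = ∑ j ∈ range (2 * m + 1), (-1) ^ j * ((2 * m).choose j : ℤ) * ((m : ℤ) - j) ^ (2 * k) := by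
  set f : ℕ → ℤ := fun j => (-1) ^ j * ((2 * m).choose j : ℤ) * ((m : ℤ) - j) ^ (2 * k) with hf
  have hsplit : ∑ j ∈ range (2 * m + 1), f j
      = (∑ j ∈ range (m + 1), f j) + ∑ j ∈ Finset.Ico (m + 1) (2 * m + 1), f j := by
    simp only [range_eq_Ico]
    exact (sum_Ico_consecutive f (by omega : 0 ≤ m + 1) (by omega : m + 1 ≤ 2 * m + 1)).symm
  have hA : ∑ j ∈ range (m + 1), f j = R k m := by
    unfold R
    refine sum_congr rfl fun j hj => ?_
    simp only [mem_range] at hj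
    rw [hf]
    rw [Nat.cast_pow, Nat.cast_sub (by omega : j ≤ m)]
  have hfm : f m = 0 := by
    rw [hf]
    simp only [sub_self]
    rw [zero_pow (by omega : 2 * k ≠ 0)]
    ring
  have hB : ∑ j ∈ Finset.Ico (m + 1) (2 * m + 1), f j = ∑ i ∈ range m, f i := by
    refine sum_nbij' (fun j => 2 * m - j) (fun i => 2 * m - i) ?_ ?_ ?_ ?_ ?_
    · intro a ha; simp only [Finset.mem_Ico] at ha; simp only [mem_range]; omega
    · intro a ha; simp only [mem_range] at ha; simp only [Finset.mem_Ico]; omega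
    · intro a ha; simp only [Finset.mem_Ico] at ha; omega
    · intro a ha; simp only [mem_range] at ha; omega
    · intro a ha
      simp only [Finset.mem_Ico] at ha
      rw [hf]
      have hsign : (-1 : ℤ) ^ (2 * m - a) = (-1) ^ a := by
        have h1 : 2 * m - a + 2 * a = 2 * m + a := by omega
        calc (-1 : ℤ) ^ (2 * m - a) = (-1 : ℤ) ^ (2 * m - a) * ((-1 : ℤ) ^ 2) ^ a := by norm_num
          _ = (-1 : ℤ) ^ (2 * m - a + 2 * a) := by rw [← pow_mul, ← pow_add]
          _ = (-1 : ℤ) ^ (2 * m) * (-1 : ℤ) ^ a := by rw [h1, pow_add]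
          _ = (-1 : ℤ) ^ a := by rw [pow_mul]; norm_num
      have hch : (2 * m).choose (2 * m - a) = (2 * m).choose a :=
        Nat.choose_symm (by omega : a ≤ 2 * m)
      have hbase : ((m : ℤ) - ((2 * m - a : ℕ) : ℤ)) ^ (2 * k) = ((m : ℤ) - a) ^ (2 * k) := by
        rw [Nat.cast_sub (by omega : a ≤ 2 * m)]
        push_cast
        rw [show (m : ℤ) - (2 * (m : ℤ) - a) = -((m : ℤ) - a) by ring,
          Even.neg_pow (even_two_mul k)]
      simp only []
      rw [hsign, hch, hbase]
  have hm' : ∑ i ∈ range m, f i = R k m := by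
    have h := hA
    rw [sum_range_succ, hfm, add_zero] at h
    exact h
  rw [hsplit, hB, hA, hm']
  ring


/- the key recurrence for `R` -/
lemma diamond (l m : ℕ) (hm : 1 ≤ m) (hml : m < l) :
    R l (m + 1) = 2 * ∑ e ∈ Finset.Ico m l, ((2 * l).choose (2 * e) : ℤ) * R e m := by
  have hl1 : 1 ≤ l := by omega
  set g : ℕ → ℤ := fun j => ((m : ℤ) + 1 - j) ^ (2 * l) with hg
  have h1 : 2 * R l (m + 1)
      = ∑ j ∈ range (2 * m + 1 + 2), (-1) ^ j * ((2 * m + 1 + 1).choose j : ℤ) * g j := by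
    rw [R_full l (m + 1) hl1, show 2 * (m + 1) + 1 = 2 * m + 1 + 2 by ring]
    refine sum_congr rfl fun j hj => ?_
    rw [show 2 * (m + 1) = 2 * m + 1 + 1 by ring, hg]
    push_cast
    ring
  have h2 := diff_step (2 * m + 1) g
  have h3 := diff_step (2 * m) (fun j => g j - g (j + 1))
  have h4 : 2 * R l (m + 1)
      = ∑ j ∈ range (2 * m + 1), (-1) ^ j * ((2 * m).choose j : ℤ)
          * ((g j - g (j + 1)) - (g (j + 1) - g (j + 1 + 1))) := by
    rw [h1, h2, show 2 * m + 1 + 1 = 2 * m + 2 by ring, h3]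
  have h5 : ∀ j ∈ range (2 * m + 1),
      (-1 : ℤ) ^ j * ((2 * m).choose j : ℤ) * ((g j - g (j + 1)) - (g (j + 1) - g (j + 1 + 1)))
        = ∑ e ∈ range l, 2 * ((2 * l).choose (2 * e + 2) : ℤ)
            * ((-1 : ℤ) ^ j * ((2 * m).choose j : ℤ) * ((m : ℤ) - j) ^ (2 * l - (2 * e + 2))) := by
    intro j hj
    have e1 : g j = (((m : ℤ) - j) + 1) ^ (2 * l) := by rw [hg]; ring_nf
    have e2 : g (j + 1) = ((m : ℤ) - j) ^ (2 * l) := by rw [hg]; push_cast; ring_nf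
    have e3 : g (j + 1 + 1) = (((m : ℤ) - j) - 1) ^ (2 * l) := by rw [hg]; push_cast; ring_nf
    have hee := even_expand ((m : ℤ) - j) l
    rw [sum_range_succ'
      (fun e => 2 * (((2 * l).choose (2 * e) : ℕ) : ℤ) * ((m : ℤ) - j) ^ (2 * l - 2 * e)) l]
      at hee
    have hee' : (((m : ℤ) - j) + 1) ^ (2 * l) + (((m : ℤ) - j) - 1) ^ (2 * l)
        - 2 * ((m : ℤ) - j) ^ (2 * l)
        = ∑ e ∈ range l, 2 * (((2 * l).choose (2 * e + 2) : ℕ) : ℤ)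
            * ((m : ℤ) - j) ^ (2 * l - (2 * e + 2)) := by
      rw [hee]
      simp only [Nat.mul_zero, Nat.sub_zero, Nat.choose_zero_right, Nat.cast_one]
      have : ∀ i ∈ range l,
          2 * (((2 * l).choose (2 * (i + 1)) : ℕ) : ℤ) * ((m : ℤ) - j) ^ (2 * l - 2 * (i + 1))
            = 2 * (((2 * l).choose (2 * i + 2) : ℕ) : ℤ)
              * ((m : ℤ) - j) ^ (2 * l - (2 * i + 2)) := by
        intro i hi
        rw [show 2 * (i + 1) = 2 * i + 2 by ring]
      rw [sum_congr rfl this]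
      ring
    calc (-1 : ℤ) ^ j * ((2 * m).choose j : ℤ)
          * ((g j - g (j + 1)) - (g (j + 1) - g (j + 1 + 1)))
        = (-1 : ℤ) ^ j * ((2 * m).choose j : ℤ)
            * ((((m : ℤ) - j) + 1) ^ (2 * l) + (((m : ℤ) - j) - 1) ^ (2 * l)
              - 2 * ((m : ℤ) - j) ^ (2 * l)) := by rw [e1, e2, e3]; ring
      _ = (-1 : ℤ) ^ j * ((2 * m).choose j : ℤ)
            * ∑ e ∈ range l, 2 * (((2 * l).choose (2 * e + 2) : ℕ) : ℤ)
              * ((m : ℤ) - j) ^ (2 * l - (2 * e + 2)) := by rw [hee']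
      _ = _ := by
            rw [mul_sum]
            exact sum_congr rfl fun i hi => by ring
  have h6 : 2 * R l (m + 1)
      = ∑ e ∈ range l, 2 * ((2 * l).choose (2 * e + 2) : ℤ)
          * (∑ j ∈ range (2 * m + 1),
              (-1 : ℤ) ^ j * ((2 * m).choose j : ℤ) * ((m : ℤ) - j) ^ (2 * l - (2 * e + 2))) := by
    rw [h4, sum_congr rfl h5, sum_comm]
    exact sum_congr rfl fun e he => by rw [mul_sum]
  set F : ℕ → ℤ := fun e => 2 * ((2 * l).choose (2 * e + 2) : ℤ)
      * (∑ j ∈ range (2 * m + 1),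
          (-1 : ℤ) ^ j * ((2 * m).choose j : ℤ) * ((m : ℤ) - j) ^ (2 * l - (2 * e + 2))) with hF
  have hsplit : ∑ e ∈ range l, F e
      = (∑ e ∈ range (l - m), F e) + ∑ e ∈ Finset.Ico (l - m) l, F e := by
    simp only [range_eq_Ico]
    exact (sum_Ico_consecutive F (by omega : 0 ≤ l - m) (by omega : l - m ≤ l)).symm
  have h7 : ∑ e ∈ Finset.Ico (l - m) l, F e = 0 := by
    refine sum_eq_zero fun e he => ?_
    simp only [Finset.mem_Ico] at he
    rw [hF]
    dsimp only
    rw [alt_vanish (2 * m) (2 * l - (2 * e + 2)) (by omega) ((m : ℤ))]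
    ring
  have h8 : ∑ e ∈ range (l - m), F e
      = ∑ e ∈ range (l - m), 2 * ((2 * l).choose (2 * e + 2) : ℤ) * (2 * R (l - 1 - e) m) := by
    refine sum_congr rfl fun e he => ?_
    simp only [mem_range] at he
    rw [hF]
    dsimp only
    rw [show 2 * l - (2 * e + 2) = 2 * (l - 1 - e) by omega,
      ← R_full (l - 1 - e) m (by omega : 1 ≤ l - 1 - e)]
  have h9 : ∑ e ∈ range (l - m), 2 * ((2 * l).choose (2 * e + 2) : ℤ) * (2 * R (l - 1 - e) m)
      = ∑ e ∈ Finset.Ico m l, 4 * (((2 * l).choose (2 * e) : ℤ) * R e m) := by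
    refine sum_nbij' (fun e => l - 1 - e) (fun e => l - 1 - e) ?_ ?_ ?_ ?_ ?_
    · intro a ha; simp only [mem_range] at ha; simp only [Finset.mem_Ico]; omega
    · intro a ha; simp only [Finset.mem_Ico] at ha; simp only [mem_range]; omega
    · intro a ha; simp only [mem_range] at ha; omega
    · intro a ha; simp only [Finset.mem_Ico] at ha; omega
    · intro a ha
      simp only [mem_range] at ha
      rw [show 2 * (l - 1 - a) = 2 * l - (2 * a + 2) by omega,
        Nat.choose_symm (by omega : 2 * a + 2 ≤ 2 * l)]
      ring
  have hfin : 2 * R l (m + 1)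
      = 2 * (2 * ∑ e ∈ Finset.Ico m l, ((2 * l).choose (2 * e) : ℤ) * R e m) := by
    rw [h6, hsplit, h7, add_zero, h8, h9]
    simp only [mul_sum]
    exact sum_congr rfl fun e he => by ring
  exact mul_left_cancel₀ (by norm_num : (2 : ℤ) ≠ 0) hfin

/- the basic binomial-pair polynomials -/
def p (m i : ℕ) : ℤ := ((i + m).choose (2 * m) : ℤ) + ((i + m - 1).choose (2 * m) : ℤ)

lemma p_zero (i : ℕ) : p 0 i = 2 := by
  simp [p]

lemma p_rec (m i : ℕ) (hm : 1 ≤ m) :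
    p m (i + 2) + p m i = 2 * p m (i + 1) + p (m - 1) (i + 1) := by
  obtain ⟨μ, rfl⟩ : ∃ μ, m = μ + 1 := ⟨m - 1, by omega⟩
  have e1 : (i + μ + 3).choose (2 * μ + 2)
      = (i + μ + 2).choose (2 * μ + 1) + (i + μ + 2).choose (2 * μ + 2) := by
    rw [show i + μ + 3 = (i + μ + 2) + 1 by ring, show 2 * μ + 2 = (2 * μ + 1) + 1 by ring]
    exact Nat.choose_succ_succ' _ _
  have e2 : (i + μ + 2).choose (2 * μ + 1)
      = (i + μ + 1).choose (2 * μ) + (i + μ + 1).choose (2 * μ + 1) := by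
    rw [show i + μ + 2 = (i + μ + 1) + 1 by ring, show 2 * μ + 1 = (2 * μ) + 1 by ring]
    exact Nat.choose_succ_succ' _ _
  have e3 : (i + μ + 1).choose (2 * μ + 1)
      = (i + μ).choose (2 * μ) + (i + μ).choose (2 * μ + 1) := by
    rw [show i + μ + 1 = (i + μ) + 1 by ring, show 2 * μ + 1 = (2 * μ) + 1 by ring]
    exact Nat.choose_succ_succ' _ _
  have e4 : (i + μ + 1).choose (2 * μ + 2)
      = (i + μ).choose (2 * μ + 1) + (i + μ).choose (2 * μ + 2) := by
    rw [show i + μ + 1 = (i + μ) + 1 by ring, show 2 * μ + 2 = (2 * μ + 1) + 1 by ring]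
    exact Nat.choose_succ_succ' _ _
  simp only [p, show μ + 1 - 1 = μ by omega, show i + 2 + (μ + 1) = i + μ + 3 by omega,
    show i + μ + 3 - 1 = i + μ + 2 by omega, show i + (μ + 1) = i + μ + 1 by omega,
    show i + μ + 1 - 1 = i + μ by omega, show i + 1 + (μ + 1) = i + μ + 2 by omega,
    show i + μ + 2 - 1 = i + μ + 1 by omega, show 2 * (μ + 1) = 2 * μ + 2 by omega,
    show i + 1 + μ = i + μ + 1 by omega]
  omega

/- the central pointwise identity -/
lemma F_id : ∀ l, 1 ≤ l → ∀ i : ℕ, ((i : ℤ)) ^ (2 * l) = ∑ m ∈ Finset.Icc 1 l, R l m * p m i := by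
  intro l
  induction l using Nat.strong_induction_on with
  | _ l ihl =>
      intro hl
      have base0 : (((0 : ℕ) : ℤ)) ^ (2 * l) = ∑ m ∈ Finset.Icc 1 l, R l m * p m 0 := by
        rw [Nat.cast_zero, zero_pow (by omega : 2 * l ≠ 0)]
        refine (sum_eq_zero fun m hm => ?_).symm
        simp only [Finset.mem_Icc] at hm
        have h1 : (0 + m : ℕ).choose (2 * m) = 0 := Nat.choose_eq_zero_of_lt (by omega)
        have h2 : (0 + m - 1 : ℕ).choose (2 * m) = 0 := Nat.choose_eq_zero_of_lt (by omega)
        simp only [p, h1, h2]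
        simp
      have base1 : (((1 : ℕ) : ℤ)) ^ (2 * l) = ∑ m ∈ Finset.Icc 1 l, R l m * p m 1 := by
        have h1 : ∀ m ∈ Finset.Icc 1 l, R l m * p m 1 = if m = 1 then 1 else 0 := by
          intro m hm
          simp only [Finset.mem_Icc] at hm
          by_cases h : m = 1
          · subst h
            simp only [p, if_pos rfl]
            norm_num [R_one l hl]
          · have h1 : (1 + m : ℕ).choose (2 * m) = 0 := Nat.choose_eq_zero_of_lt (by omega)
            have h2 : (1 + m - 1 : ℕ).choose (2 * m) = 0 := Nat.choose_eq_zero_of_lt (by omega)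
            simp only [p, h1, h2, if_neg h]
            simp
        rw [sum_congr rfl h1, sum_ite_eq' (Finset.Icc 1 l) 1 (fun _ => (1 : ℤ))]
        simp [hl]
      intro i
      induction i using Nat.strong_induction_on with
      | _ i ihi =>
          match i with
          | 0 => exact base0
          | 1 => exact base1
          | (j + 2) =>
              have hj1 := ihi (j + 1) (by omega)
              have hj0 := ihi j (by omega)
              have hD : ∑ m ∈ Finset.Icc 1 l, R l m * p (m - 1) (j + 1)
                  = (((j : ℤ) + 2)) ^ (2 * l) - 2 * (((j : ℤ) + 1)) ^ (2 * l)
                    + ((j : ℤ)) ^ (2 * l) := by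
                have hee := even_expand ((j : ℤ) + 1) l
                rw [sum_range_succ
                  (fun e => 2 * (((2 * l).choose (2 * e) : ℕ) : ℤ) * ((j : ℤ) + 1) ^ (2 * l - 2 * e))
                  l] at hee
                simp only [Nat.choose_self, Nat.sub_self, pow_zero, mul_one, Nat.cast_one] at hee
                rw [show (j : ℤ) + 1 + 1 = (j : ℤ) + 2 by ring,
                  show (j : ℤ) + 1 - 1 = (j : ℤ) by ring] at hee
                have hT : ∑ e ∈ range l,
                      2 * (((2 * l).choose (2 * e) : ℕ) : ℤ) * ((j : ℤ) + 1) ^ (2 * l - 2 * e)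
                    = 2 * ((j : ℤ) + 1) ^ (2 * l)
                      + ∑ e ∈ Finset.Ico 1 l,
                        2 * (((2 * l).choose (2 * e) : ℕ) : ℤ) * ((j : ℤ) + 1) ^ (2 * l - 2 * e) := by
                  rw [range_eq_Ico, sum_eq_sum_Ico_succ_bot (by omega : 0 < l)]
                  norm_num
                rw [hT] at hee
                have hL : ∑ m ∈ Finset.Icc 1 l, R l m * p (m - 1) (j + 1)
                    = 2 + ∑ m ∈ Finset.Icc 1 (l - 1), R l (m + 1) * p m (j + 1) := by
                  obtain ⟨L, hLl⟩ : ∃ L, l = L + 1 := ⟨l - 1, by omega⟩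
                  subst hLl
                  rw [show Finset.Icc 1 (L + 1) = Finset.Ico 1 (L + 2) by exact (Finset.Ico_add_one_right_eq_Icc 1 (L + 1)).symm,
                    sum_Ico_eq_sum_range, show L + 2 - 1 = L + 1 by omega,
                    sum_range_succ' (fun i => R (L + 1) (1 + i) * p (1 + i - 1) (j + 1)) L,
                    show Finset.Icc 1 (L + 1 - 1) = Finset.Ico 1 (L + 1) by
                      rw [show L + 1 - 1 = L by omega, Finset.Ico_add_one_right_eq_Icc],
                    sum_Ico_eq_sum_range, show L + 1 - 1 = L by omega]
                  have hg0 : R (L + 1) (1 + 0) * p (1 + 0 - 1) (j + 1) = 2 := by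
                    norm_num [R_one (L + 1) (by omega), p_zero]
                  rw [hg0, add_comm]
                  congr 1
                have hRc : ∀ m ∈ Finset.Icc 1 (l - 1),
                    R l (m + 1) * p m (j + 1)
                      = ∑ e ∈ Finset.Ico m l,
                          2 * (((2 * l).choose (2 * e) : ℕ) : ℤ) * R e m * p m (j + 1) := by
                  intro m hm
                  simp only [Finset.mem_Icc] at hm
                  rw [diamond l m (by omega) (by omega), mul_sum, sum_mul]
                  exact sum_congr rfl fun e he => by ring
                have hswap : ∑ m ∈ Finset.Icc 1 (l - 1), ∑ e ∈ Finset.Ico m l,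
                      2 * (((2 * l).choose (2 * e) : ℕ) : ℤ) * R e m * p m (j + 1)
                    = ∑ e ∈ Finset.Ico 1 l, ∑ m ∈ Finset.Icc 1 e,
                      2 * (((2 * l).choose (2 * e) : ℕ) : ℤ) * R e m * p m (j + 1) := by
                  rw [show Finset.Icc 1 (l - 1) = Finset.Ico 1 l by
                    rw [← Finset.Ico_add_one_right_eq_Icc]; congr 1; omega]
                  rw [sum_Ico_Ico_comm 1 l
                    (fun m e => 2 * (((2 * l).choose (2 * e) : ℕ) : ℤ) * R e m * p m (j + 1))]
                  refine sum_congr rfl fun e he => ?_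
                  rw [show Finset.Icc 1 e = Finset.Ico 1 (e + 1) by rw [Finset.Ico_add_one_right_eq_Icc]]
                have hinner : ∀ e ∈ Finset.Ico 1 l,
                    ∑ m ∈ Finset.Icc 1 e,
                        2 * (((2 * l).choose (2 * e) : ℕ) : ℤ) * R e m * p m (j + 1)
                      = 2 * (((2 * l).choose (2 * e) : ℕ) : ℤ) * ((j : ℤ) + 1) ^ (2 * e) := by
                  intro e he
                  simp only [Finset.mem_Ico] at he
                  have hF := ihl e (by omega) (by omega) (j + 1)
                  push_cast at hF
                  calc ∑ m ∈ Finset.Icc 1 e,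
                        2 * (((2 * l).choose (2 * e) : ℕ) : ℤ) * R e m * p m (j + 1)
                      = 2 * (((2 * l).choose (2 * e) : ℕ) : ℤ)
                          * ∑ m ∈ Finset.Icc 1 e, R e m * p m (j + 1) := by
                        rw [mul_sum]
                        exact sum_congr rfl fun m hm => by ring
                    _ = 2 * (((2 * l).choose (2 * e) : ℕ) : ℤ) * ((j : ℤ) + 1) ^ (2 * e) := by
                        rw [← hF]
                have hsym : ∑ e ∈ Finset.Ico 1 l,
                      2 * (((2 * l).choose (2 * e) : ℕ) : ℤ) * ((j : ℤ) + 1) ^ (2 * e)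
                    = ∑ e ∈ Finset.Ico 1 l,
                      2 * (((2 * l).choose (2 * e) : ℕ) : ℤ) * ((j : ℤ) + 1) ^ (2 * l - 2 * e) := by
                  refine sum_nbij' (fun e => l - e) (fun e => l - e) ?_ ?_ ?_ ?_ ?_
                  · intro a ha; simp only [Finset.mem_Ico] at ha ⊢; omega
                  · intro a ha; simp only [Finset.mem_Ico] at ha ⊢; omega
                  · intro a ha; simp only [Finset.mem_Ico] at ha; omega
                  · intro a ha; simp only [Finset.mem_Ico] at ha; omega
                  · intro a ha
                    simp only [Finset.mem_Ico] at ha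
                    rw [show 2 * (l - a) = 2 * l - 2 * a by omega,
                      Nat.choose_symm (by omega : 2 * a ≤ 2 * l),
                      show 2 * l - (2 * l - 2 * a) = 2 * a by omega]
                rw [hL, sum_congr rfl hRc, hswap, sum_congr rfl hinner, hsym]
                linarith [hee]
              calc (((j + 2 : ℕ) : ℤ)) ^ (2 * l)
                  = 2 * (((j + 1 : ℕ) : ℤ)) ^ (2 * l) - ((j : ℤ)) ^ (2 * l)
                    + (∑ m ∈ Finset.Icc 1 l, R l m * p (m - 1) (j + 1)) := by
                    rw [hD]; push_cast; ring
                _ = ∑ m ∈ Finset.Icc 1 l, R l m * p m (j + 2) := by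
                    rw [hj1, hj0]
                    have hp : ∀ m ∈ Finset.Icc 1 l,
                        R l m * p m (j + 2)
                          = 2 * (R l m * p m (j + 1)) + R l m * p (m - 1) (j + 1)
                            - R l m * p m j := by
                      intro m hm
                      simp only [Finset.mem_Icc] at hm
                      have hpr := p_rec m j hm.1
                      have : p m (j + 2) = 2 * p m (j + 1) + p (m - 1) (j + 1) - p m j := by
                        linarith [hpr]
                      rw [this]
                      ring
                    rw [sum_congr rfl hp, sum_sub_distrib, sum_add_distrib, ← mul_sum]
                    ring

def G (l n : ℕ) : ℤ := ∑ m ∈ Finset.Icc 1 l, R l m * ((n + m + 1).choose (2 * m + 1) : ℤ)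

def H (l n : ℕ) : ℤ := ∑ m ∈ Finset.Icc 1 l, R l m * ((n + m).choose (2 * m) : ℤ)

lemma G_succ (l n : ℕ) : G l (n + 1) = G l n + H l (n + 1) := by
  unfold G H
  rw [← sum_add_distrib]
  refine sum_congr rfl fun m hm => ?_
  rw [show n + 1 + m + 1 = (n + m + 1) + 1 by omega, show n + 1 + m = n + m + 1 by omega,
    Nat.choose_succ_succ' (n + m + 1) (2 * m)]
  push_cast
  ring

lemma H_F (l : ℕ) (hl : 1 ≤ l) (i : ℕ) : H l (i + 1) + H l i = ((i : ℤ) + 1) ^ (2 * l) := by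
  have h := F_id l hl (i + 1)
  push_cast at h
  rw [h]
  unfold H
  rw [← sum_add_distrib]
  refine sum_congr rfl fun m hm => ?_
  simp only [p, show i + 1 + m - 1 = i + m by omega]
  ring

lemma G_zero (l : ℕ) : G l 0 = 0 := by
  refine sum_eq_zero fun m hm => ?_
  simp only [Finset.mem_Icc] at hm
  rw [Nat.choose_eq_zero_of_lt (by omega), Nat.cast_zero, mul_zero]

lemma H_zero (l : ℕ) : H l 0 = 0 := by
  refine sum_eq_zero fun m hm => ?_
  simp only [Finset.mem_Icc] at hm
  rw [Nat.choose_eq_zero_of_lt (by omega), Nat.cast_zero, mul_zero]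

lemma G_one (l : ℕ) (hl : 1 ≤ l) : G l 1 = 1 := by
  have h1 := G_succ l 0
  have h2 := H_F l hl 0
  norm_num [G_zero, H_zero] at h1 h2
  rw [h1, h2]

lemma G_step (l n : ℕ) (hl : 1 ≤ l) : G l (n + 2) = G l n + ((n : ℤ) + 2) ^ (2 * l) := by
  have h1 : G l (n + 2) = G l (n + 1) + H l (n + 1 + 1) := by
    rw [show n + 2 = (n + 1) + 1 by omega, G_succ l (n + 1)]
  have h2 := H_F l hl (n + 1)
  have h3 := G_succ l n
  push_cast at h2
  rw [show ((n : ℤ) + 1 + 1) = (n : ℤ) + 2 by ring] at h2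
  rw [h1, h3]
  linarith [h2]

lemma G_even (l : ℕ) (hl : 1 ≤ l) (q : ℕ) :
    G l (2 * q) = ∑ s ∈ range (q + 1), ((2 * s : ℕ) : ℤ) ^ (2 * l) := by
  induction q with
  | zero => simp [G_zero, zero_pow (by omega : 2 * l ≠ 0)]
  | succ q ih =>
      rw [show 2 * (q + 1) = 2 * q + 2 by ring, G_step l (2 * q) hl, ih,
        sum_range_succ (fun s => ((2 * s : ℕ) : ℤ) ^ (2 * l)) (q + 1)]
      push_cast
      rw [show (2 : ℤ) * (q : ℤ) + 2 = 2 * ((q : ℤ) + 1) by ring]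

lemma G_odd (l : ℕ) (hl : 1 ≤ l) (q : ℕ) :
    G l (2 * q + 1) = ∑ s ∈ range (q + 1), ((2 * s + 1 : ℕ) : ℤ) ^ (2 * l) := by
  induction q with
  | zero => simp [G_one l hl]
  | succ q ih =>
      rw [show 2 * (q + 1) + 1 = (2 * q + 1) + 2 by ring, G_step l (2 * q + 1) hl, ih,
        sum_range_succ (fun s => ((2 * s + 1 : ℕ) : ℤ) ^ (2 * l)) (q + 1)]
      push_cast
      rw [show (2 : ℤ) * (q : ℤ) + 1 + 2 = 2 * ((q : ℤ) + 1) + 1 by ring]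

theorem stmt_10 (k n : ℕ) (hk : 1 ≤ k) (hn : 1 ≤ n) :
    (2 ^ (2 * k - 1) * S (2 * k - 1) n : ℤ) =
      ∑ m ∈ Finset.Icc 1 k, Q k m n * ((n + m).choose (2 * m - 1) : ℤ) := by
  -- the doubled power sum
  have hLHS : (2 ^ (2 * k - 1) * S (2 * k - 1) n : ℤ)
      = ∑ i ∈ range (n + 1), (2 * (i : ℤ)) ^ (2 * k - 1) := by
    rw [range_eq_Ico, sum_eq_sum_Ico_succ_bot (by omega : 0 < n + 1)]
    rw [show (2 * ((0 : ℕ) : ℤ)) ^ (2 * k - 1) = 0 by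
      rw [Nat.cast_zero, mul_zero, zero_pow (by omega : 2 * k - 1 ≠ 0)]]
    rw [zero_add]
    unfold S
    rw [show Finset.Icc 1 n = Finset.Ico 1 (n + 1) by rw [Finset.Ico_add_one_right_eq_Icc]]
    push_cast
    rw [mul_sum]
    exact sum_congr rfl fun i hi => (mul_pow 2 (i : ℤ) (2 * k - 1)).symm
  -- peel off the m = 1 term
  have hsplit : ∑ m ∈ Finset.Icc 1 k, Q k m n * ((n + m).choose (2 * m - 1) : ℤ)
      = (n : ℤ) ^ (2 * k - 1) * ((n : ℤ) + 1)
        + ∑ m ∈ Finset.Ico 2 (k + 1), Q k m n * ((n + m).choose (2 * m - 1) : ℤ) := by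
    rw [show Finset.Icc 1 k = Finset.Ico 1 (k + 1) by rw [Finset.Ico_add_one_right_eq_Icc],
      sum_eq_sum_Ico_succ_bot (by omega : 1 < k + 1)]
    congr 1
    have h1 : Q k 1 n = (n : ℤ) ^ (2 * k - 1) := by simp [Q]
    rw [h1, show 2 * 1 - 1 = 1 by omega, Nat.choose_one_right]
    push_cast
    ring
  -- expand Q for m ≥ 2
  have hQ : ∀ m ∈ Finset.Ico 2 (k + 1), Q k m n * ((n + m).choose (2 * m - 1) : ℤ)
      = ∑ j ∈ Finset.Ico m (k + 1),
          2 * (((2 * k - 1).choose (2 * j - 2) : ℕ) : ℤ) * (n : ℤ) ^ (2 * k - 2 * j + 1)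
            * (R (j - 1) (m - 1) * ((n + m).choose (2 * m - 1) : ℤ)) := by
    intro m hm
    simp only [Finset.mem_Ico] at hm
    have h1 : Q k m n = 2 * ∑ j ∈ Finset.Icc m k,
        ((2 * k - 1).choose (2 * j - 2) : ℤ) * R (j - 1) (m - 1)
          * (n : ℤ) ^ (2 * k - 2 * j + 1) := by
      rw [Q, if_neg (by omega)]
    rw [h1, show Finset.Icc m k = Finset.Ico m (k + 1) by rw [Finset.Ico_add_one_right_eq_Icc], mul_sum,
      sum_mul]
    exact sum_congr rfl fun j hj => by ring
  -- swap the double sum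
  have hswap : ∑ m ∈ Finset.Ico 2 (k + 1), ∑ j ∈ Finset.Ico m (k + 1),
        2 * (((2 * k - 1).choose (2 * j - 2) : ℕ) : ℤ) * (n : ℤ) ^ (2 * k - 2 * j + 1)
          * (R (j - 1) (m - 1) * ((n + m).choose (2 * m - 1) : ℤ))
      = ∑ j ∈ Finset.Ico 2 (k + 1), ∑ m ∈ Finset.Ico 2 (j + 1),
        2 * (((2 * k - 1).choose (2 * j - 2) : ℕ) : ℤ) * (n : ℤ) ^ (2 * k - 2 * j + 1)
          * (R (j - 1) (m - 1) * ((n + m).choose (2 * m - 1) : ℤ)) :=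
    sum_Ico_Ico_comm 2 (k + 1) _
  -- the inner sum is G (j-1) n
  have hinner : ∀ j ∈ Finset.Ico 2 (k + 1),
      ∑ m ∈ Finset.Ico 2 (j + 1),
          2 * (((2 * k - 1).choose (2 * j - 2) : ℕ) : ℤ) * (n : ℤ) ^ (2 * k - 2 * j + 1)
            * (R (j - 1) (m - 1) * ((n + m).choose (2 * m - 1) : ℤ))
        = 2 * (((2 * k - 1).choose (2 * j - 2) : ℕ) : ℤ) * (n : ℤ) ^ (2 * k - 2 * j + 1)
            * G (j - 1) n := by
    intro j hj
    simp only [Finset.mem_Ico] at hj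
    rw [G, mul_sum]
    rw [show Finset.Icc 1 (j - 1) = Finset.Ico 1 j by
      rw [← Finset.Ico_add_one_right_eq_Icc]; congr 1; omega]
    rw [sum_Ico_eq_sum_range, sum_Ico_eq_sum_range]
    rw [show j + 1 - 2 = j - 1 by omega]
    refine sum_congr rfl fun i hi => ?_
    rw [show 2 + i - 1 = 1 + i by omega, show n + (2 + i) = n + (1 + i) + 1 by omega,
      show 2 * (2 + i) - 1 = 2 * (1 + i) + 1 by omega]
  have hRHS : ∑ m ∈ Finset.Icc 1 k, Q k m n * ((n + m).choose (2 * m - 1) : ℤ)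
      = (n : ℤ) ^ (2 * k - 1) * ((n : ℤ) + 1)
        + ∑ j ∈ Finset.Ico 2 (k + 1),
            2 * (((2 * k - 1).choose (2 * j - 2) : ℕ) : ℤ) * (n : ℤ) ^ (2 * k - 2 * j + 1)
              * G (j - 1) n := by
    rw [hsplit, sum_congr rfl hQ, hswap, sum_congr rfl hinner]
  -- the even-part binomial evaluation
  have hW : ∀ b : ℤ,
      ∑ j ∈ Finset.Ico 2 (k + 1),
          2 * (((2 * k - 1).choose (2 * j - 2) : ℕ) : ℤ) * (n : ℤ) ^ (2 * k - 2 * j + 1)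
            * b ^ (2 * (j - 1))
        = ((n : ℤ) + b) ^ (2 * k - 1) + ((n : ℤ) - b) ^ (2 * k - 1)
          - 2 * (n : ℤ) ^ (2 * k - 1) := by
    intro b
    have h := odd_part (n : ℤ) b k hk
    rw [show Finset.Icc 1 k = Finset.Ico 1 (k + 1) by rw [Finset.Ico_add_one_right_eq_Icc],
      sum_eq_sum_Ico_succ_bot (by omega : 1 < k + 1)] at h
    rw [show 2 * 1 - 2 = 0 by omega, show 2 * k - 2 * 1 + 1 = 2 * k - 1 by omega] at h
    simp only [Nat.choose_zero_right, Nat.cast_one, pow_zero, mul_one] at h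
    have h2 : ∑ j ∈ Finset.Ico 2 (k + 1),
        2 * (((2 * k - 1).choose (2 * j - 2) : ℕ) : ℤ) * (n : ℤ) ^ (2 * k - 2 * j + 1)
          * b ^ (2 * (j - 1))
        = ∑ j ∈ Finset.Ico 2 (k + 1),
        2 * (((2 * k - 1).choose (2 * j - 2) : ℕ) : ℤ) * (n : ℤ) ^ (2 * k - 2 * j + 1)
          * b ^ (2 * j - 2) := by
      refine sum_congr rfl fun j hj => ?_
      simp only [Finset.mem_Ico] at hj
      rw [show 2 * (j - 1) = 2 * j - 2 by omega]
    rw [h2]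
    linarith [h]
  set f : ℕ → ℤ := fun i => (2 * (i : ℤ)) ^ (2 * k - 1) with hfdef
  rw [hLHS, hRHS]
  rcases Nat.even_or_odd n with ⟨q, hq⟩ | ⟨q, hq⟩
  · -- n = 2q, q ≥ 1
    have hq1 : 1 ≤ q := by omega
    have hGv : ∀ j ∈ Finset.Ico 2 (k + 1),
        2 * (((2 * k - 1).choose (2 * j - 2) : ℕ) : ℤ) * (n : ℤ) ^ (2 * k - 2 * j + 1)
            * G (j - 1) n
          = ∑ s ∈ range (q + 1),
            2 * (((2 * k - 1).choose (2 * j - 2) : ℕ) : ℤ) * (n : ℤ) ^ (2 * k - 2 * j + 1)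
              * ((2 * s : ℕ) : ℤ) ^ (2 * (j - 1)) := by
      intro j hj
      simp only [Finset.mem_Ico] at hj
      rw [show n = 2 * q by omega, G_even (j - 1) (by omega) q, mul_sum]
    rw [sum_congr rfl hGv, sum_comm]
    have hval : ∀ s ∈ range (q + 1),
        ∑ j ∈ Finset.Ico 2 (k + 1),
            2 * (((2 * k - 1).choose (2 * j - 2) : ℕ) : ℤ) * (n : ℤ) ^ (2 * k - 2 * j + 1)
              * ((2 * s : ℕ) : ℤ) ^ (2 * (j - 1))
          = f (q + s) + f (q - s) - 2 * (n : ℤ) ^ (2 * k - 1) := by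
      intro s hs
      simp only [mem_range] at hs
      rw [hW (((2 * s : ℕ) : ℤ))]
      have e1 : (n : ℤ) + ((2 * s : ℕ) : ℤ) = 2 * ((q + s : ℕ) : ℤ) := by push_cast; omega
      have e2 : (n : ℤ) - ((2 * s : ℕ) : ℤ) = 2 * ((q - s : ℕ) : ℤ) := by
        push_cast [Nat.cast_sub (by omega : s ≤ q)]; omega
      rw [e1, e2]
    rw [sum_congr rfl hval]
    have hrefl : ∑ s ∈ range (q + 1), f (q - s) = ∑ s ∈ range (q + 1), f s := by
      rw [← sum_range_reflect f (q + 1)]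
      exact sum_congr rfl fun s hs => by rw [show q + 1 - 1 - s = q - s by omega]
    have hsum1 : ∑ i ∈ range (n + 1), f i
        = (∑ i ∈ range q, f i) + ∑ i ∈ range (q + 1), f (q + i) := by
      rw [show n + 1 = q + (q + 1) by omega, sum_range_add f q (q + 1)]
    rw [hsum1]
    rw [sum_sub_distrib, sum_add_distrib, hrefl, sum_const, card_range, sum_range_succ f q]
    have hn2 : (n : ℤ) = 2 * ((q : ℕ) : ℤ) := by push_cast; omega
    rw [hn2]
    push_cast
    ring
  · -- n = 2q + 1
    have hGv : ∀ j ∈ Finset.Ico 2 (k + 1),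
        2 * (((2 * k - 1).choose (2 * j - 2) : ℕ) : ℤ) * (n : ℤ) ^ (2 * k - 2 * j + 1)
            * G (j - 1) n
          = ∑ s ∈ range (q + 1),
            2 * (((2 * k - 1).choose (2 * j - 2) : ℕ) : ℤ) * (n : ℤ) ^ (2 * k - 2 * j + 1)
              * ((2 * s + 1 : ℕ) : ℤ) ^ (2 * (j - 1)) := by
      intro j hj
      simp only [Finset.mem_Ico] at hj
      rw [show n = 2 * q + 1 by omega, G_odd (j - 1) (by omega) q, mul_sum]
    rw [sum_congr rfl hGv, sum_comm]
    have hval : ∀ s ∈ range (q + 1),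
        ∑ j ∈ Finset.Ico 2 (k + 1),
            2 * (((2 * k - 1).choose (2 * j - 2) : ℕ) : ℤ) * (n : ℤ) ^ (2 * k - 2 * j + 1)
              * ((2 * s + 1 : ℕ) : ℤ) ^ (2 * (j - 1))
          = f (q + 1 + s) + f (q - s) - 2 * (n : ℤ) ^ (2 * k - 1) := by
      intro s hs
      simp only [mem_range] at hs
      rw [hW (((2 * s + 1 : ℕ) : ℤ))]
      have e1 : (n : ℤ) + ((2 * s + 1 : ℕ) : ℤ) = 2 * ((q + 1 + s : ℕ) : ℤ) := by
        push_cast; omega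
      have e2 : (n : ℤ) - ((2 * s + 1 : ℕ) : ℤ) = 2 * ((q - s : ℕ) : ℤ) := by
        push_cast [Nat.cast_sub (by omega : s ≤ q)]; omega
      rw [e1, e2]
    rw [sum_congr rfl hval]
    have hrefl : ∑ s ∈ range (q + 1), f (q - s) = ∑ s ∈ range (q + 1), f s := by
      rw [← sum_range_reflect f (q + 1)]
      exact sum_congr rfl fun s hs => by rw [show q + 1 - 1 - s = q - s by omega]
    have hsum1 : ∑ i ∈ range (n + 1), f i
        = (∑ i ∈ range (q + 1), f i) + ∑ i ∈ range (q + 1), f (q + 1 + i) := by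
      rw [show n + 1 = (q + 1) + (q + 1) by omega, sum_range_add f (q + 1) (q + 1)]
    rw [hsum1]
    rw [sum_sub_distrib, sum_add_distrib, hrefl, sum_const, card_range]
    have hn2 : (n : ℤ) = 2 * ((q : ℕ) : ℤ) + 1 := by push_cast; omega
    rw [hn2]
    push_cast
    ring
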